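/- Let G be a triangle-free graph of pathwidth k. Then any EPG-representation of G lies in a grid with at least (k+1)/6 rows and, symmetrically, at least (k+1)/6 columns; hence the grid area is Ω(k²). -/

import Mathlib

/-- Two grid points are adjacent (at distance 1). -/
def adjPt (p q : ℤ × ℤ) : Prop :=
  (p.1 = q.1 ∧ (p.2 - q.2 = 1 ∨ q.2 - p.2 = 1)) ∨
  (p.2 = q.2 ∧ (p.1 - q.1 = 1 ∨ q.1 - p.1 = 1))

/-- A (simple) path in the rectangular integer grid. -/
structure GridPath where
  len : ℕ
  pts : Fin (len + 1) → ℤ × ℤ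
  adj : ∀ i : Fin len, adjPt (pts i.castSucc) (pts i.succ)
  inj : Function.Injective pts

/-- The set of grid-edges used by a grid path. -/
def GridPath.edges (P : GridPath) : Set (Sym2 (ℤ × ℤ)) :=
  {e | ∃ i : Fin P.len, e = s(P.pts i.castSucc, P.pts i.succ)}

/-- The set of grid-points used by a grid path. -/
def GridPath.points (P : GridPath) : Set (ℤ × ℤ) :=
  Set.range P.pts

/-- The grid path lies inside the `w × h` grid. -/
def GridPath.InGrid (P : GridPath) (w h : ℕ) : Prop :=
  ∀ p ∈ P.points, 1 ≤ p.1 ∧ p.1 ≤ (w : ℤ) ∧ 1 ≤ p.2 ∧ p.2 ≤ (h : ℤ)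

/-- An EPG-representation: vertices are adjacent iff their paths share a grid-edge. -/
def IsEPGRep {V : Type*} (G : SimpleGraph V) (rep : V → GridPath) : Prop :=
  ∀ v w : V, G.Adj v w ↔ v ≠ w ∧ ((rep v).edges ∩ (rep w).edges).Nonempty


/-- `l, r` give an interval representation of the graph `H`. -/
def IsIntervalRep {V : Type*} (H : SimpleGraph V) (l r : V → ℝ) : Prop :=
  (∀ v, l v ≤ r v) ∧
  ∀ v w : V, H.Adj v w ↔
    v ≠ w ∧ (Set.Icc (l v) (r v) ∩ Set.Icc (l w) (r w)).Nonempty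

/-- `H` is an interval graph. -/
def IsIntervalGraph {V : Type*} (H : SimpleGraph V) : Prop :=
  ∃ l r : V → ℝ, IsIntervalRep H l r

/-- `pwLE G k` means the pathwidth of `G` is at most `k`: `G` is a subgraph of a
`(k+1)`-colourable interval graph. -/
def pwLE {V : Type*} (G : SimpleGraph V) (k : ℕ) : Prop :=
  ∃ H : SimpleGraph V, G ≤ H ∧ IsIntervalGraph H ∧ H.Colorable (k + 1)

/- ### Auxiliary lemmas -/

private lemma ivt_up (f : ℕ → ℤ) (hf : ∀ n, (f (n+1) - f n).natAbs ≤ 1) :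
    ∀ n a x, f a ≤ x → x ≤ f (a + n) → ∃ c, f c = x := by
  intro n
  induction n with
  | zero => intro a x h1 h2; exact ⟨a, le_antisymm h1 (by simpa using h2)⟩
  | succ n ih =>
    intro a x h1 h2
    rcases le_or_gt x (f (a + n)) with h | h
    · exact ih a x h1 h
    · refine ⟨a + n + 1, ?_⟩
      have := hf (a + n)
      have h2' : x ≤ f (a + n + 1) := by
        have e : a + (n+1) = a + n + 1 := by omega
        rwa [e] at h2
      omega

private lemma ivt (f : ℕ → ℤ) (hf : ∀ n, (f (n+1) - f n).natAbs ≤ 1)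
    (a b : ℕ) (x : ℤ) (h1 : f a ≤ x) (h2 : x ≤ f b) : ∃ c, f c = x := by
  rcases le_total a b with hab | hab
  · have e : a + (b - a) = b := by omega
    exact ivt_up f hf (b - a) a x h1 (by rwa [e])
  · have key := ivt_up (fun n => - f n) (by intro n; have := hf n; omega)
      (a - b) b (-x) (by simpa using h2)
      (by simp only [neg_le_neg_iff]; rw [show b + (a-b) = a by omega]; exact h1)
    obtain ⟨c, hc⟩ := key
    have hc' : - f c = - x := hc
    exact ⟨c, by omega⟩

/-- Discrete IVT for the x-coordinates of a grid path. -/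
private lemma GridPath.exists_point_x (P : GridPath) (x : ℤ)
    (h1 : ∃ i, (P.pts i).1 ≤ x) (h2 : ∃ j, x ≤ (P.pts j).1) :
    ∃ i, (P.pts i).1 = x := by
  set f : ℕ → ℤ := fun n => (P.pts ⟨min n P.len, by omega⟩).1 with hfdef
  have hstep : ∀ n, (f (n+1) - f n).natAbs ≤ 1 := by
    intro n
    rcases le_or_gt P.len n with hn | hn
    · have e1 : min n P.len = P.len := by omega
      have e2 : min (n+1) P.len = P.len := by omega
      simp [hfdef, e1, e2]
    · have e1 : (⟨min n P.len, by omega⟩ : Fin (P.len + 1)) = (⟨n, hn⟩ : Fin P.len).castSucc := by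
        ext; simp [Fin.castSucc]; omega
      have e2 : (⟨min (n+1) P.len, by omega⟩ : Fin (P.len + 1)) = (⟨n, hn⟩ : Fin P.len).succ := by
        ext; simp [Fin.succ]; omega
      have := P.adj ⟨n, hn⟩
      rcases this with ⟨hx, _⟩ | ⟨_, hx⟩ <;> simp only [hfdef, e1, e2] <;> omega
  obtain ⟨i, hi⟩ := h1
  obtain ⟨j, hj⟩ := h2
  have hfi : f i.val = (P.pts i).1 := by
    simp only [hfdef]; congr 2; ext; simp; omega
  have hfj : f j.val = (P.pts j).1 := by
    simp only [hfdef]; congr 2; ext; simp; omega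
  obtain ⟨c, hc⟩ := ivt f hstep i.val j.val x (by rw [hfi]; exact hi) (by rw [hfj]; exact hj)
  exact ⟨⟨min c P.len, by omega⟩, hc⟩

/-- Every point of a path of positive length lies on some edge of the path. -/
private lemma GridPath.exists_edge_at (P : GridPath) (hlen : P.len ≠ 0) (i : Fin (P.len + 1)) :
    ∃ q : ℤ × ℤ, q ∈ P.points ∧ (adjPt (P.pts i) q ∨ adjPt q (P.pts i)) ∧
      s(P.pts i, q) ∈ P.edges := by
  by_cases hi : i.val < P.len
  · refine ⟨P.pts (⟨i.val, hi⟩ : Fin P.len).succ, ⟨_, rfl⟩, ?_, ?_⟩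
    · left
      have e : (⟨i.val, hi⟩ : Fin P.len).castSucc = i := by ext; simp
      have := P.adj ⟨i.val, hi⟩
      rwa [e] at this
    · refine ⟨⟨i.val, hi⟩, ?_⟩
      have e : (⟨i.val, hi⟩ : Fin P.len).castSucc = i := by ext; simp
      rw [e]
  · have hi' : i.val = P.len := by omega
    have hpos : 0 < P.len := Nat.pos_of_ne_zero hlen
    refine ⟨P.pts (⟨P.len - 1, by omega⟩ : Fin P.len).castSucc, ⟨_, rfl⟩, ?_, ?_⟩
    · right
      have e : (⟨P.len - 1, by omega⟩ : Fin P.len).succ = i := by ext; simp; omega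
      have := P.adj ⟨P.len - 1, by omega⟩
      rw [← e]
      exact this
    · refine ⟨⟨P.len - 1, by omega⟩, ?_⟩
      have e : (⟨P.len - 1, by omega⟩ : Fin P.len).succ = i := by ext; simp; omega
      rw [← e, Sym2.eq_swap]

/-- Greedy colouring of an interval representation. -/
private lemma greedy_color {V : Type*} [Fintype V] [DecidableEq V] (l r : V → ℝ) (N : ℕ)
    (hN : 0 < N) (hlr : ∀ v, l v ≤ r v)
    (hcov : ∀ v, (Finset.univ.filter (fun u => l u ≤ l v ∧ l v ≤ r u)).card ≤ N) :
    ∃ c : V → Fin N, ∀ u v : V, u ≠ v →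
      (Set.Icc (l u) (r u) ∩ Set.Icc (l v) (r v)).Nonempty → c u ≠ c v := by
  classical
  have key : ∀ s : Finset V, ∃ c : V → Fin N, ∀ u ∈ s, ∀ v ∈ s, u ≠ v →
      (Set.Icc (l u) (r u) ∩ Set.Icc (l v) (r v)).Nonempty → c u ≠ c v := by
    intro s
    induction s using Finset.strongInductionOn with
    | _ s ih =>
      rcases s.eq_empty_or_nonempty with rfl | hs
      · exact ⟨fun _ => ⟨0, hN⟩, by simp⟩
      · obtain ⟨v, hvs, hvmax⟩ := Finset.exists_max_image s l hs
        obtain ⟨c0, hc0⟩ := ih (s.erase v) (Finset.erase_ssubset hvs)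
        set T : Finset V := (s.erase v).filter
          (fun u => (Set.Icc (l u) (r u) ∩ Set.Icc (l v) (r v)).Nonempty) with hT
        have hTsub : T ⊆ (Finset.univ.filter (fun u => l u ≤ l v ∧ l v ≤ r u)).erase v := by
          intro u hu
          simp only [hT, Finset.mem_filter, Finset.mem_erase] at hu
          obtain ⟨⟨hne, hus⟩, t, ⟨ht1, ht2⟩, ht3, ht4⟩ := hu
          exact Finset.mem_erase.2 ⟨hne, Finset.mem_filter.2
            ⟨Finset.mem_univ _, hvmax u hus, le_trans ht3 ht2⟩⟩
        have hTcard : T.card < N := by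
          have h1 := Finset.card_le_card hTsub
          have h2 : ((Finset.univ.filter (fun u => l u ≤ l v ∧ l v ≤ r u)).erase v).card <
              (Finset.univ.filter (fun u => l u ≤ l v ∧ l v ≤ r u)).card :=
            Finset.card_erase_lt_of_mem
              (Finset.mem_filter.2 ⟨Finset.mem_univ _, le_refl _, hlr v⟩)
          have h3 := hcov v
          omega
        have : ∃ a : Fin N, a ∉ T.image c0 := by
          by_contra hcon
          push_neg at hcon
          have hsub : (Finset.univ : Finset (Fin N)) ⊆ T.image c0 := fun a _ => hcon a
          have hcard := Finset.card_le_card hsub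
          have himg := Finset.card_image_le (s := T) (f := c0)
          simp only [Finset.card_univ, Fintype.card_fin] at hcard
          omega
        obtain ⟨a, ha⟩ := this
        refine ⟨Function.update c0 v a, ?_⟩
        intro u1 hu1 u2 hu2 hne hint
        by_cases h1 : u1 = v <;> by_cases h2 : u2 = v
        · exact absurd (h1.trans h2.symm) hne
        · subst h1
          rw [Function.update_self, Function.update_of_ne h2]
          have hu2T : u2 ∈ T := Finset.mem_filter.2 ⟨Finset.mem_erase.2 ⟨h2, hu2⟩,
            by rwa [Set.inter_comm] at hint⟩
          exact fun hEq => ha (hEq ▸ Finset.mem_image_of_mem c0 hu2T)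
        · subst h2
          rw [Function.update_self, Function.update_of_ne h1]
          have hu1T : u1 ∈ T := Finset.mem_filter.2 ⟨Finset.mem_erase.2 ⟨h1, hu1⟩, hint⟩
          exact fun hEq => ha ((hEq.symm) ▸ Finset.mem_image_of_mem c0 hu1T)
        · rw [Function.update_of_ne h1, Function.update_of_ne h2]
          exact hc0 u1 (Finset.mem_erase.2 ⟨h1, hu1⟩) u2 (Finset.mem_erase.2 ⟨h2, hu2⟩) hne hint
  obtain ⟨c, hc⟩ := key Finset.univ
  exact ⟨c, fun u v hne hint => hc u (Finset.mem_univ u) v (Finset.mem_univ v) hne hint⟩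

/-- Main counting lemma: in any EPG-representation on `h` rows of a triangle-free
graph of pathwidth exactly `k`, we have `k + 1 ≤ 6 h`. -/
private lemma rows_bound {V : Type*} [Fintype V] [Nonempty V] (G : SimpleGraph V)
    (hG : G.CliqueFree 3) (k : ℕ) (hpwge : ∀ j, pwLE G j → k ≤ j)
    (rep : V → GridPath) (hrep : IsEPGRep G rep)
    (w h : ℕ) (hgrid : ∀ v, (rep v).InGrid w h) : k + 1 ≤ 6 * h := by
  classical
  obtain ⟨v0⟩ := (inferInstance : Nonempty V)
  have hpt : ∀ v (i : Fin ((rep v).len + 1)), 1 ≤ ((rep v).pts i).1 ∧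
      ((rep v).pts i).1 ≤ (w : ℤ) ∧ 1 ≤ ((rep v).pts i).2 ∧ ((rep v).pts i).2 ≤ (h : ℤ) :=
    fun v i => hgrid v _ ⟨i, rfl⟩
  have hh1 : 1 ≤ h := by
    have := (hpt v0 0).2.2.1
    have := (hpt v0 0).2.2.2
    omega
  -- min and max x-coordinates
  have hne : ∀ v : V, (Finset.univ.image fun i => ((rep v).pts i).1).Nonempty :=
    fun v => Finset.Nonempty.image Finset.univ_nonempty _
  set A : V → ℤ := fun v => (Finset.univ.image fun i => ((rep v).pts i).1).min' (hne v) with hA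
  set B : V → ℤ := fun v => (Finset.univ.image fun i => ((rep v).pts i).1).max' (hne v) with hB
  have hAle : ∀ v i, A v ≤ ((rep v).pts i).1 := by
    intro v i
    simp only [hA]
    exact Finset.min'_le (Finset.univ.image fun j => ((rep v).pts j).1) _ (Finset.mem_image_of_mem _ (Finset.mem_univ i))
  have hBle : ∀ v i, ((rep v).pts i).1 ≤ B v := by
    intro v i
    simp only [hB]
    exact Finset.le_max' (Finset.univ.image fun j => ((rep v).pts j).1) _ (Finset.mem_image_of_mem _ (Finset.mem_univ i))
  have hAmem : ∀ v, ∃ i, ((rep v).pts i).1 = A v := by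
    intro v
    have h' := Finset.min'_mem (Finset.univ.image fun i => ((rep v).pts i).1) (hne v)
    rw [Finset.mem_image] at h'
    obtain ⟨i, _, hi⟩ := h'
    exact ⟨i, hi⟩
  have hBmem : ∀ v, ∃ i, ((rep v).pts i).1 = B v := by
    intro v
    have h' := Finset.max'_mem (Finset.univ.image fun i => ((rep v).pts i).1) (hne v)
    rw [Finset.mem_image] at h'
    obtain ⟨i, _, hi⟩ := h'
    exact ⟨i, hi⟩
  have hA1 : ∀ v, 1 ≤ A v := by
    intro v
    obtain ⟨i, hi⟩ := hAmem v
    rw [← hi]; exact (hpt v i).1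
  -- the intervals
  set n : V → ℕ := fun v => (Fintype.equivFin V v : ℕ) with hn
  set l : V → ℝ := fun v => if (rep v).len = 0 then -(n v : ℝ) - 1 else (A v : ℝ) with hl
  set r : V → ℝ := fun v => if (rep v).len = 0 then -(n v : ℝ) - 1 else (B v : ℝ) with hr
  have hlr : ∀ v, l v ≤ r v := by
    intro v
    simp only [hl, hr]
    split
    · exact le_refl _
    · obtain ⟨i, hi⟩ := hBmem v
      have := hAle v i
      rw [hi] at this
      exact_mod_cast this
  -- each grid edge is used by at most two paths
  have hmult : ∀ e : Sym2 (ℤ × ℤ),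
      (Finset.univ.filter fun u => e ∈ (rep u).edges).card ≤ 2 := by
    intro e
    by_contra hlt
    push_neg at hlt
    rw [Finset.two_lt_card_iff] at hlt
    obtain ⟨a, b, c, ha, hb, hc, hab, hac, hbc⟩ := hlt
    rw [Finset.mem_filter] at ha hb hc
    have Hab : G.Adj a b := (hrep a b).2 ⟨hab, e, ha.2, hb.2⟩
    have Hac : G.Adj a c := (hrep a c).2 ⟨hac, e, ha.2, hc.2⟩
    have Hbc : G.Adj b c := (hrep b c).2 ⟨hbc, e, hb.2, hc.2⟩
    exact hG {a, b, c} (SimpleGraph.is3Clique_triple_iff.2 ⟨Hab, Hac, Hbc⟩)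
  -- the set of grid-edges incident to column x
  set E : ℤ → Finset (Sym2 (ℤ × ℤ)) := fun x =>
    ((Finset.Icc (1:ℤ) h).image fun y => s(((x:ℤ), y), (x, y+1))) ∪
    ((Finset.Icc (1:ℤ) h).image fun y => s((x-1, y), (x, y))) ∪
    ((Finset.Icc (1:ℤ) h).image fun y => s((x, y), (x+1, y))) with hE
  have hEcard : ∀ x, (E x).card ≤ 3 * h := by
    intro x
    have hIcc : (Finset.Icc (1:ℤ) (h:ℤ)).card = h := by
      rw [Int.card_Icc]; omega
    have u1 := Finset.card_union_le
      (((Finset.Icc (1:ℤ) h).image fun y => s(((x:ℤ), y), (x, y+1))) ∪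
        ((Finset.Icc (1:ℤ) h).image fun y => s((x-1, y), (x, y))))
      ((Finset.Icc (1:ℤ) h).image fun y => s((x, y), (x+1, y)))
    have u2 := Finset.card_union_le
      ((Finset.Icc (1:ℤ) h).image fun y => s(((x:ℤ), y), (x, y+1)))
      ((Finset.Icc (1:ℤ) h).image fun y => s((x-1, y), (x, y)))
    have c1 : ((Finset.Icc (1:ℤ) h).image fun y => s(((x:ℤ), y), (x, y+1))).card ≤ h :=
      le_trans Finset.card_image_le (le_of_eq hIcc)
    have c2 : ((Finset.Icc (1:ℤ) h).image fun y => s((x-1, y), ((x:ℤ), y))).card ≤ h :=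
      le_trans Finset.card_image_le (le_of_eq hIcc)
    have c3 : ((Finset.Icc (1:ℤ) h).image fun y => s(((x:ℤ), y), (x+1, y))).card ≤ h :=
      le_trans Finset.card_image_le (le_of_eq hIcc)
    simp only [hE]
    omega
  -- any path whose x-range covers x uses an edge of E x
  have hedge : ∀ (u : V) (x : ℤ), (rep u).len ≠ 0 → A u ≤ x → x ≤ B u →
      ∃ e ∈ E x, e ∈ (rep u).edges := by
    intro u x hlen h1 h2
    obtain ⟨ia, hia⟩ := hAmem u
    obtain ⟨ib, hib⟩ := hBmem u
    obtain ⟨i, hi⟩ := (rep u).exists_point_x x ⟨ia, by rw [hia]; exact h1⟩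
      ⟨ib, by rw [hib]; exact h2⟩
    obtain ⟨q, hq, hadj, hmem⟩ := (rep u).exists_edge_at hlen i
    obtain ⟨j, hjq⟩ := hq
    have hpb := hpt u i
    have hqb := hpt u j
    rw [hjq] at hqb
    obtain ⟨pp, hP⟩ : ∃ pp, (rep u).pts i = pp := ⟨_, rfl⟩
    obtain ⟨px, py⟩ := pp
    obtain ⟨qx, qy⟩ := q
    rw [hP] at hi hadj hmem hpb
    dsimp only at hi hpb hqb
    have hadj' : (px = qx ∧ (py - qy = 1 ∨ qy - py = 1)) ∨
        (py = qy ∧ (px - qx = 1 ∨ qx - px = 1)) := by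
      unfold adjPt at hadj
      dsimp only at hadj
      rcases hadj with (⟨h', h''⟩ | ⟨h', h''⟩) | (⟨h', h''⟩ | ⟨h', h''⟩)
      · exact Or.inl ⟨h', h''⟩
      · exact Or.inr ⟨h', h''⟩
      · exact Or.inl ⟨h'.symm, by omega⟩
      · exact Or.inr ⟨h'.symm, by omega⟩
    refine ⟨s((px, py), (qx, qy)), ?_, hmem⟩
    rw [hE]
    simp only [Finset.mem_union, Finset.mem_image, Finset.mem_Icc]
    rcases hadj' with ⟨hxx, hyy | hyy⟩ | ⟨hyy, hxx | hxx⟩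
    · -- q = (x, py - 1) : vertical edge at y = qy
      left; left
      refine ⟨qy, ⟨by omega, by omega⟩, ?_⟩
      have e1 : px = x := hi
      have e2 : qx = x := by omega
      have e3 : py = qy + 1 := by omega
      subst e1 e2 e3
      exact Sym2.eq_swap
    · -- q = (x, py + 1) : vertical edge at y = py
      left; left
      refine ⟨py, ⟨by omega, by omega⟩, ?_⟩
      have e1 : px = x := hi
      have e2 : qx = x := by omega
      have e3 : qy = py + 1 := by omega
      subst e1 e2 e3
      rfl
    · -- q = (x - 1, py)
      left; right
      refine ⟨py, ⟨by omega, by omega⟩, ?_⟩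
      have e1 : px = x := hi
      have e2 : qx = x - 1 := by omega
      have e3 : qy = py := by omega
      subst e1 e2 e3
      exact Sym2.eq_swap
    · -- q = (x + 1, py)
      right
      refine ⟨py, ⟨by omega, by omega⟩, ?_⟩
      have e1 : px = x := hi
      have e2 : qx = x + 1 := by omega
      have e3 : qy = py := by omega
      subst e1 e2 e3
      rfl
  -- the coverage bound
  have hcov : ∀ v, (Finset.univ.filter (fun u => l u ≤ l v ∧ l v ≤ r u)).card ≤ 6 * h := by
    intro v
    by_cases hv : (rep v).len = 0
    · have : (Finset.univ.filter (fun u => l u ≤ l v ∧ l v ≤ r u)) ⊆ {v} := by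
        intro u hu
        rw [Finset.mem_filter] at hu
        obtain ⟨-, hu1, hu2⟩ := hu
        have hlv : l v = -(n v : ℝ) - 1 := by simp [hl, hv]
        rw [Finset.mem_singleton]
        by_cases hu0 : (rep u).len = 0
        · have hlu : l u = -(n u : ℝ) - 1 := by simp [hl, hu0]
          have hru : r u = -(n u : ℝ) - 1 := by simp [hr, hu0]
          rw [hlv, hlu] at hu1
          rw [hlv, hru] at hu2
          have : (n u : ℝ) = n v := by linarith
          have : n u = n v := by exact_mod_cast this
          exact (Fintype.equivFin V).injective (Fin.ext this)
        · exfalso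
          have hlu : l u = (A u : ℝ) := by simp [hl, hu0]
          have : (1 : ℝ) ≤ A u := by exact_mod_cast hA1 u
          have hnn : (0:ℝ) ≤ (n u : ℝ) := Nat.cast_nonneg _
          rw [hlv, hlu] at hu1
          linarith
      calc _ ≤ ({v} : Finset V).card := Finset.card_le_card this
        _ = 1 := rfl
        _ ≤ 6 * h := by omega
    · have hlv : l v = (A v : ℝ) := by simp [hl, hv]
      have hsub : (Finset.univ.filter (fun u => l u ≤ l v ∧ l v ≤ r u)) ⊆
          (E (A v)).biUnion (fun e => Finset.univ.filter fun u => e ∈ (rep u).edges) := by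
        intro u hu
        rw [Finset.mem_filter] at hu
        obtain ⟨-, hu1, hu2⟩ := hu
        have hu0 : (rep u).len ≠ 0 := by
          intro h0
          have hru : r u = -(n u : ℝ) - 1 := by simp [hr, h0]
          have : (1 : ℝ) ≤ A v := by exact_mod_cast hA1 v
          have hnn : (0:ℝ) ≤ (n u : ℝ) := Nat.cast_nonneg _
          rw [hlv, hru] at hu2
          linarith
        have hlu : l u = (A u : ℝ) := by simp [hl, hu0]
        have hru : r u = (B u : ℝ) := by simp [hr, hu0]
        rw [hlv, hlu] at hu1
        rw [hlv, hru] at hu2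
        have h1 : A u ≤ A v := by exact_mod_cast hu1
        have h2 : A v ≤ B u := by exact_mod_cast hu2
        obtain ⟨e, he1, he2⟩ := hedge u (A v) hu0 h1 h2
        exact Finset.mem_biUnion.2 ⟨e, he1, Finset.mem_filter.2 ⟨Finset.mem_univ _, he2⟩⟩
      calc _ ≤ _ := Finset.card_le_card hsub
        _ ≤ ∑ e ∈ E (A v), (Finset.univ.filter fun u => e ∈ (rep u).edges).card :=
            Finset.card_biUnion_le
        _ ≤ (E (A v)).card • 2 := Finset.sum_le_card_nsmul _ _ 2 (fun e _ => hmult e)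
        _ ≤ (3 * h) * 2 := by
            rw [smul_eq_mul]
            exact Nat.mul_le_mul_right 2 (hEcard _)
        _ ≤ 6 * h := by omega
  -- the interval graph H
  obtain ⟨c, hc⟩ := greedy_color l r (6 * h) (by omega) hlr hcov
  set H : SimpleGraph V := {
    Adj := fun u v => u ≠ v ∧ (Set.Icc (l u) (r u) ∩ Set.Icc (l v) (r v)).Nonempty
    symm := ⟨by
      intro u v ⟨h1, h2⟩
      exact ⟨h1.symm, by rwa [Set.inter_comm]⟩⟩
    loopless := ⟨fun u ⟨h1, _⟩ => h1 rfl⟩ } with hH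
  have hGH : G ≤ H := by
    intro a b hab
    obtain ⟨hab_ne, e, he1, he2⟩ := (hrep a b).1 hab
    obtain ⟨i, rfl⟩ := he1
    obtain ⟨j, hj⟩ := he2
    have hla : (rep a).len ≠ 0 := by have := i.isLt; omega
    have hlb : (rep b).len ≠ 0 := by have := j.isLt; omega
    -- common point
    have hcommon : ∃ p : ℤ × ℤ, (∃ i', (rep a).pts i' = p) ∧ ∃ j', (rep b).pts j' = p := by
      rw [Sym2.eq_iff] at hj
      rcases hj with ⟨h1, -⟩ | ⟨h1, -⟩
      · exact ⟨_, ⟨i.castSucc, rfl⟩, ⟨j.castSucc, h1.symm⟩⟩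
      · exact ⟨_, ⟨i.castSucc, rfl⟩, ⟨j.succ, h1.symm⟩⟩
    obtain ⟨p, ⟨i', hi'⟩, ⟨j', hj'⟩⟩ := hcommon
    refine ⟨hab_ne, ⟨(p.1 : ℝ), ⟨?_, ?_⟩, ⟨?_, ?_⟩⟩⟩
    · rw [show l a = (A a : ℝ) by simp [hl, hla]]
      exact_mod_cast (hi' ▸ hAle a i')
    · rw [show r a = (B a : ℝ) by simp [hr, hla]]
      exact_mod_cast (hi' ▸ hBle a i')
    · rw [show l b = (A b : ℝ) by simp [hl, hlb]]
      exact_mod_cast (hj' ▸ hAle b j')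
    · rw [show r b = (B b : ℝ) by simp [hr, hlb]]
      exact_mod_cast (hj' ▸ hBle b j')
  have hHint : IsIntervalGraph H := ⟨l, r, hlr, fun v w => Iff.rfl⟩
  have hHcol : H.Colorable (6 * h) :=
    ⟨SimpleGraph.Coloring.mk c (fun {u v} huv => hc u v huv.1 huv.2)⟩
  have hk : k ≤ 6 * h - 1 := hpwge (6 * h - 1)
    ⟨H, hGH, hHint, by rwa [show 6 * h - 1 + 1 = 6 * h by omega]⟩
  omega

/-- Transpose of a grid path (swap the two coordinates). -/
private def GridPath.transpose (P : GridPath) : GridPath where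
  len := P.len
  pts := fun i => ((P.pts i).2, (P.pts i).1)
  adj := fun i => by
    have := P.adj i
    unfold adjPt at this ⊢
    tauto
  inj := fun i j hij => P.inj (by
    have h1 := congrArg Prod.fst hij
    have h2 := congrArg Prod.snd hij
    exact Prod.ext h2 h1)

private def swapPt : ℤ × ℤ → ℤ × ℤ := fun p => (p.2, p.1)

private lemma swapPt_invol : ∀ p, swapPt (swapPt p) = p := fun _ => rfl

private lemma GridPath.edges_transpose (P : GridPath) :
    P.transpose.edges = (Sym2.map swapPt) '' P.edges := by
  ext e
  constructor
  · rintro ⟨i, rfl⟩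
    exact ⟨s(P.pts i.castSucc, P.pts i.succ), ⟨i, rfl⟩, rfl⟩
  · rintro ⟨e', ⟨i, rfl⟩, rfl⟩
    exact ⟨i, rfl⟩

private lemma sym2_swap_invol (e : Sym2 (ℤ × ℤ)) : Sym2.map swapPt (Sym2.map swapPt e) = e := by
  rw [Sym2.map_map]
  have : swapPt ∘ swapPt = id := funext swapPt_invol
  rw [this, Sym2.map_id, id_eq]

private lemma transpose_inter {P Q : GridPath} :
    (P.transpose.edges ∩ Q.transpose.edges).Nonempty ↔ (P.edges ∩ Q.edges).Nonempty := by
  rw [P.edges_transpose, Q.edges_transpose]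
  constructor
  · rintro ⟨e, ⟨e1, he1, rfl⟩, ⟨e2, he2, h21⟩⟩
    have : e2 = e1 := by
      have := congrArg (Sym2.map swapPt) h21
      rwa [sym2_swap_invol, sym2_swap_invol] at this
    exact ⟨e1, he1, this ▸ he2⟩
  · rintro ⟨e, he1, he2⟩
    exact ⟨Sym2.map swapPt e, ⟨e, he1, rfl⟩, ⟨e, he2, rfl⟩⟩

theorem stmt4 {V : Type*} [Fintype V] [Nonempty V] (G : SimpleGraph V)
    (hG : G.CliqueFree 3) (k : ℕ)
    (hpwle : pwLE G k) (hpwge : ∀ j, pwLE G j → k ≤ j)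
    (rep : V → GridPath) (hrep : IsEPGRep G rep)
    (w h : ℕ) (hgrid : ∀ v, (rep v).InGrid w h) :
    ((k : ℝ) + 1) / 6 ≤ (h : ℝ) ∧ ((k : ℝ) + 1) / 6 ≤ (w : ℝ) ∧
      (((k : ℝ) + 1) * ((k : ℝ) + 1)) / 36 ≤ (w : ℝ) * (h : ℝ) := by
  have hrows : k + 1 ≤ 6 * h := rows_bound G hG k hpwge rep hrep w h hgrid
  have hrep' : IsEPGRep G (fun v => (rep v).transpose) := by
    intro u v
    rw [hrep u v]
    constructor
    · rintro ⟨hne, hint⟩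
      exact ⟨hne, transpose_inter.2 hint⟩
    · rintro ⟨hne, hint⟩
      exact ⟨hne, transpose_inter.1 hint⟩
  have hgrid' : ∀ v, (rep v).transpose.InGrid h w := by
    intro v p hp
    obtain ⟨i, rfl⟩ := hp
    have := hgrid v ((rep v).pts i) ⟨i, rfl⟩
    exact ⟨this.2.2.1, this.2.2.2, this.1, this.2.1⟩
  have hcols : k + 1 ≤ 6 * w :=
    rows_bound G hG k hpwge (fun v => (rep v).transpose) hrep' h w hgrid'
  have h1 : ((k : ℝ) + 1) / 6 ≤ (h : ℝ) := by
    rw [div_le_iff₀ (by norm_num : (0:ℝ) < 6)]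
    have : ((k : ℝ) + 1) ≤ 6 * (h : ℝ) := by exact_mod_cast hrows
    linarith
  have h2 : ((k : ℝ) + 1) / 6 ≤ (w : ℝ) := by
    rw [div_le_iff₀ (by norm_num : (0:ℝ) < 6)]
    have : ((k : ℝ) + 1) ≤ 6 * (w : ℝ) := by exact_mod_cast hcols
    linarith
  refine ⟨h1, h2, ?_⟩
  have ha : (0:ℝ) ≤ ((k : ℝ) + 1) / 6 := by positivity
  have := mul_le_mul h2 h1 ha (le_trans ha h2)
  calc (((k : ℝ) + 1) * ((k : ℝ) + 1)) / 36 = (((k : ℝ) + 1) / 6) * (((k : ℝ) + 1) / 6) := by ring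
    _ ≤ (w : ℝ) * (h : ℝ) := this
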